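/- Let x ∈ A^ℕ be normal, let k ≥ 1, and factor x into consecutive blocks w_1 w_2 w_3 ⋯ of length k. Then for every word w ∈ A^k, the limiting frequency of indices i with w_i = w equals (#A)^{-k}: lim_{n→∞} #{1 ≤ i ≤ n : w_i = w}/n = (#A)^{-k}. -/

import Mathlib

open BigOperators Filter

/-- Number of occurrences of the word `w` starting in the first `n` positions of `x`. -/
def occCount {A : Type*} [DecidableEq A] (x : ℕ → A) (w : List A) (n : ℕ) : ℕ :=
  ((Finset.range n).filter (fun i => ∀ j : Fin w.length, x (i + j) = w.get j)).card

/-- A sequence is normal if every nonempty finite word occurs with limiting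
frequency `(#A)^{-|w|}`. -/
def IsNormal {A : Type*} [Fintype A] [DecidableEq A] (x : ℕ → A) : Prop :=
  ∀ w : List A, w ≠ [] →
    Filter.Tendsto (fun n => (occCount x w n : ℝ) / n) Filter.atTop
      (nhds (1 / (Fintype.card A : ℝ) ^ w.length))

set_option linter.unusedSectionVars false
set_option maxHeartbeats 1000000

section Moments
open Finset
variable {K : Type*} [Fintype K] [DecidableEq K] [Nonempty K]

lemma pi_sum_succ {t : ℕ} (G : (Fin (t+1) → K) → ℝ) :
    ∑ v : Fin (t+1) → K, G v = ∑ a : K, ∑ v : Fin t → K, G (Fin.cons a v) := by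
  rw [← (Fin.consEquiv (fun _ : Fin (t+1) => K)).sum_comp G]
  rw [Fintype.sum_prod_type]
  rfl

lemma card_pi_cast (t : ℕ) : ((Fintype.card (Fin t → K) : ℝ)) = (Fintype.card K : ℝ) ^ t := by
  rw [Fintype.card_fun, Fintype.card_fin]; push_cast; ring

variable (Y : K → ℝ)

lemma sumZ1 (h0 : ∑ a : K, Y a = 0) :
    ∀ t : ℕ, ∑ v : Fin t → K, (∑ s, Y (v s)) = 0 := by
  intro t
  induction t with
  | zero => simp
  | succ t ih =>
    rw [pi_sum_succ]
    have : ∀ (a : K), ∑ v : Fin t → K, (∑ s : Fin (t+1), Y ((Fin.cons a v : Fin (t+1) → K) s))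
        = (Fintype.card (Fin t → K) : ℝ) * Y a + ∑ v : Fin t → K, (∑ s, Y (v s)) := by
      intro a
      simp only [Fin.sum_univ_succ, Fin.cons_zero, Fin.cons_succ, Finset.sum_add_distrib,
        Finset.sum_const, Finset.card_univ, nsmul_eq_mul]
    simp only [this, ih, add_zero, ← Finset.mul_sum, h0, mul_zero]

lemma sum_pow_le (hb : ∀ a, |Y a| ≤ 1) (h1 : ∑ a : K, |Y a| ≤ 2) {m : ℕ} (hm : 1 ≤ m) :
    |∑ a : K, Y a ^ m| ≤ 2 := by
  calc |∑ a : K, Y a ^ m| ≤ ∑ a : K, |Y a ^ m| := Finset.abs_sum_le_sum_abs _ _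
    _ ≤ ∑ a : K, |Y a| := by
        refine Finset.sum_le_sum (fun a _ => ?_)
        rw [abs_pow]
        calc |Y a| ^ m ≤ |Y a| ^ 1 := pow_le_pow_of_le_one (abs_nonneg _) (hb a) hm
          _ = |Y a| := pow_one _
    _ ≤ 2 := h1

lemma sumZ2 (h0 : ∑ a : K, Y a = 0) (hb : ∀ a, |Y a| ≤ 1) (h1 : ∑ a : K, |Y a| ≤ 2) :
    ∀ t : ℕ, ∑ v : Fin t → K, (∑ s, Y (v s))^2 ≤ 2 * t * (Fintype.card K : ℝ) ^ t := by
  have hM1 : (1:ℝ) ≤ (Fintype.card K : ℝ) := by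
    exact_mod_cast Nat.one_le_iff_ne_zero.mpr Fintype.card_ne_zero
  intro t
  induction t with
  | zero => simp
  | succ t ih =>
    rw [pi_sum_succ]
    have key : ∀ (a : K), ∑ v : Fin t → K, (∑ s : Fin (t+1), Y ((Fin.cons a v : Fin (t+1) → K) s))^2
        = (Fintype.card K : ℝ)^t * Y a ^ 2
          + 2 * Y a * (∑ v : Fin t → K, (∑ s, Y (v s)))
          + ∑ v : Fin t → K, (∑ s, Y (v s))^2 := by
      intro a
      have : ∀ v : Fin t → K, (∑ s : Fin (t+1), Y ((Fin.cons a v : Fin (t+1) → K) s))^2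
          = Y a ^ 2 + 2 * Y a * (∑ s, Y (v s)) + (∑ s, Y (v s))^2 := by
        intro v
        rw [Fin.sum_univ_succ]
        simp only [Fin.cons_zero, Fin.cons_succ]
        ring
      simp only [this, Finset.sum_add_distrib, Finset.sum_const, Finset.card_univ,
        nsmul_eq_mul, card_pi_cast, ← Finset.mul_sum]
    simp only [key, sumZ1 Y h0 t, mul_zero, add_zero, Finset.sum_add_distrib,
      ← Finset.mul_sum, Finset.sum_const, Finset.card_univ, nsmul_eq_mul]
    have hY2 : ∑ a : K, Y a ^ 2 ≤ 2 := by
      have := sum_pow_le Y hb h1 (m := 2) (by norm_num)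
      exact (abs_le.mp this).2
    have hMt : (1:ℝ) ≤ (Fintype.card K : ℝ) ^ t := one_le_pow₀ hM1
    have h2 : (Fintype.card K : ℝ) * (∑ v : Fin t → K, (∑ s, Y (v s))^2)
        ≤ (Fintype.card K : ℝ) * (2 * t * (Fintype.card K : ℝ) ^ t) :=
      mul_le_mul_of_nonneg_left ih (by positivity)
    have h3 : (Fintype.card K : ℝ)^t * (∑ a : K, Y a ^ 2) ≤ 2 * (Fintype.card K : ℝ)^t :=
      by nlinarith [hMt]
    have hps : (Fintype.card K : ℝ)^(t+1) = (Fintype.card K : ℝ)^t * (Fintype.card K : ℝ) :=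
      pow_succ _ _
    have h4 : (Fintype.card K : ℝ)^t ≤ (Fintype.card K : ℝ)^t * (Fintype.card K : ℝ) :=
      le_mul_of_one_le_right (by positivity) hM1
    push_cast
    nlinarith [h2, h3, h4, hps]

lemma sumZ4 (h0 : ∑ a : K, Y a = 0) (hb : ∀ a, |Y a| ≤ 1) (h1 : ∑ a : K, |Y a| ≤ 2) :
    ∀ t : ℕ, ∑ v : Fin t → K, (∑ s, Y (v s))^4 ≤ 26 * t^2 * (Fintype.card K : ℝ) ^ t := by
  have hM1 : (1:ℝ) ≤ (Fintype.card K : ℝ) := by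
    exact_mod_cast Nat.one_le_iff_ne_zero.mpr Fintype.card_ne_zero
  intro t
  induction t with
  | zero => simp
  | succ t ih =>
    rw [pi_sum_succ]
    have key : ∀ (a : K), ∑ v : Fin t → K, (∑ s : Fin (t+1), Y ((Fin.cons a v : Fin (t+1) → K) s))^4
        = (Fintype.card K : ℝ)^t * Y a ^ 4
          + 4 * Y a ^ 3 * (∑ v : Fin t → K, (∑ s, Y (v s)))
          + 6 * Y a ^ 2 * (∑ v : Fin t → K, (∑ s, Y (v s))^2)
          + 4 * Y a * (∑ v : Fin t → K, (∑ s, Y (v s))^3)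
          + ∑ v : Fin t → K, (∑ s, Y (v s))^4 := by
      intro a
      have : ∀ v : Fin t → K, (∑ s : Fin (t+1), Y ((Fin.cons a v : Fin (t+1) → K) s))^4
          = Y a ^ 4 + 4 * Y a ^ 3 * (∑ s, Y (v s)) + 6 * Y a ^ 2 * (∑ s, Y (v s))^2
            + 4 * Y a * (∑ s, Y (v s))^3 + (∑ s, Y (v s))^4 := by
        intro v
        rw [Fin.sum_univ_succ]
        simp only [Fin.cons_zero, Fin.cons_succ]
        ring
      simp only [this, Finset.sum_add_distrib, Finset.sum_const, Finset.card_univ,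
        nsmul_eq_mul, card_pi_cast, ← Finset.mul_sum]
    simp only [key, sumZ1 Y h0 t, mul_zero, add_zero, Finset.sum_add_distrib,
      ← Finset.mul_sum, ← Finset.sum_mul, Finset.sum_const, Finset.card_univ, nsmul_eq_mul]
    rw [h0]
    have hY2 : ∑ a : K, Y a ^ 2 ≤ 2 := (abs_le.mp (sum_pow_le Y hb h1 (by norm_num : 1 ≤ 2))).2
    have hY4 : ∑ a : K, Y a ^ 4 ≤ 2 := (abs_le.mp (sum_pow_le Y hb h1 (by norm_num : 1 ≤ 4))).2
    have hY2n : (0:ℝ) ≤ ∑ a : K, Y a ^ 2 := Finset.sum_nonneg (fun a _ => by positivity)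
    have hS2n : (0:ℝ) ≤ ∑ v : Fin t → K, (∑ s, Y (v s))^2 :=
      Finset.sum_nonneg (fun v _ => by positivity)
    have hS2 := sumZ2 Y h0 hb h1 t
    have hMt : (1:ℝ) ≤ (Fintype.card K : ℝ) ^ t := one_le_pow₀ hM1
    have hps : (Fintype.card K : ℝ)^(t+1) = (Fintype.card K : ℝ)^t * (Fintype.card K : ℝ) :=
      pow_succ _ _
    have h2 : (Fintype.card K : ℝ) * (∑ v : Fin t → K, (∑ s, Y (v s))^4)
        ≤ (Fintype.card K : ℝ) * (26 * t^2 * (Fintype.card K : ℝ) ^ t) :=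
      mul_le_mul_of_nonneg_left ih (by positivity)
    have h3 : (Fintype.card K : ℝ)^t * (∑ a : K, Y a ^ 4) ≤ 2 * (Fintype.card K : ℝ)^t :=
      by nlinarith [hMt]
    have h5 : (∑ a : K, Y a ^ 2) * (∑ v : Fin t → K, (∑ s, Y (v s))^2)
        ≤ 2 * (2 * t * (Fintype.card K : ℝ) ^ t) :=
      mul_le_mul hY2 hS2 hS2n (by norm_num)
    have h4 : (Fintype.card K : ℝ)^t ≤ (Fintype.card K : ℝ)^t * (Fintype.card K : ℝ) :=
      le_mul_of_one_le_right (by positivity) hM1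
    have h6 : (t:ℝ) * (Fintype.card K : ℝ)^t ≤ (t:ℝ) * ((Fintype.card K : ℝ)^t * (Fintype.card K : ℝ)) :=
      mul_le_mul_of_nonneg_left h4 (by positivity)
    push_cast
    nlinarith [h2, h3, h4, h5, h6, hps]

end Moments

section BlockWord
open Finset

lemma sum_range_mul' (f : ℕ → ℝ) (t : ℕ) :
    ∀ Γ : ℕ, ∑ i ∈ range (Γ * t), f i = ∑ g ∈ range Γ, ∑ s ∈ range t, f (g * t + s) := by
  intro Γ
  induction Γ with
  | zero => simp
  | succ Γ ih =>
    rw [Nat.succ_mul, Finset.sum_range_add, ih, Finset.sum_range_succ]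

def blockWord {A : Type*} (k t : ℕ) (hk : 0 < k) (u : Fin t → Fin k → A) : List A :=
  List.ofFn (fun i : Fin (t * k) =>
    u ⟨(i : ℕ) / k, (Nat.div_lt_iff_lt_mul hk).mpr i.2⟩ ⟨(i : ℕ) % k, Nat.mod_lt _ hk⟩)

lemma blockWord_length {A : Type*} (k t : ℕ) (hk : 0 < k) (u : Fin t → Fin k → A) :
    (blockWord k t hk u).length = t * k := by simp [blockWord]

lemma blockWord_ne_nil {A : Type*} (k t : ℕ) (hk : 0 < k) (ht : 0 < t) (u : Fin t → Fin k → A) :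
    blockWord k t hk u ≠ [] := by
  intro h
  have := blockWord_length k t hk u
  rw [h] at this
  simp at this
  omega

lemma blockWord_occ {A : Type*} [DecidableEq A] (x : ℕ → A) (k t : ℕ) (hk : 0 < k)
    (u : Fin t → Fin k → A) (g : ℕ)
    (hU : ∀ (s : Fin t) (j : Fin k), x ((g * t + (s : ℕ)) * k + (j : ℕ)) = u s j) :
    ∀ j : Fin (blockWord k t hk u).length,
      x (g * (t * k) + (j : ℕ)) = (blockWord k t hk u).get j := by
  intro j
  rw [List.get_eq_getElem]
  simp only [blockWord, List.getElem_ofFn, Fin.coe_cast]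
  have hj : ((j : ℕ) / k) * k + (j : ℕ) % k = (j : ℕ) := Nat.div_add_mod' _ _
  have hlt : (j : ℕ) < t * k := lt_of_lt_of_eq j.2 (blockWord_length k t hk u)
  have h1 := hU ⟨(j : ℕ) / k, (Nat.div_lt_iff_lt_mul hk).mpr hlt⟩ ⟨(j : ℕ) % k, Nat.mod_lt _ hk⟩
  rw [← h1]
  congr 1
  simp only []
  rw [Nat.add_mul, Nat.mul_assoc, Nat.add_assoc, hj]

lemma lt_div_succ_mul (n t : ℕ) (ht : 0 < t) : n < (n/t + 1)*t := by
  have h1 := Nat.div_add_mod n t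
  have h2 := Nat.mod_lt n ht
  calc n = t*(n/t) + n%t := h1.symm
    _ < t*(n/t) + t := by omega
    _ = (n/t+1)*t := by ring

lemma abs_le_quartic (y c : ℝ) (hc : 0 < c) : |y| ≤ y^4/c^3 + c := by
  rcases le_or_gt |y| c with h | h
  · have : 0 ≤ y^4/c^3 := by positivity
    linarith
  · have h0 : 0 ≤ |y| := abs_nonneg y
    have habs : |y|^4 = y^4 := by
      rw [← abs_pow]
      exact abs_of_nonneg (by positivity)
    have h2 : c^3 ≤ |y|^3 := pow_le_pow_left₀ hc.le h.le 3
    have h1 : |y| * c^3 ≤ y^4 := by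
      calc |y| * c^3 ≤ |y| * |y|^3 := mul_le_mul_of_nonneg_left h2 h0
        _ = |y|^4 := by ring
        _ = y^4 := habs
    have : |y| ≤ y^4/c^3 := (le_div_iff₀ (by positivity)).mpr h1
    linarith

end BlockWord

/-- In a normal sequence, the aligned occurrences of each block of length `k ≥ 1`
(i.e. occurrences at positions that are multiples of `k`) have limiting frequency
`(#A)^{-k}` among the consecutive blocks of length `k`. -/
theorem aligned_block_frequency {A : Type*} [Fintype A] [DecidableEq A] [Nonempty A]
    (x : ℕ → A) (hx : IsNormal x) (k : ℕ) (hk : 1 ≤ k) (w : Fin k → A) :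
    Filter.Tendsto
      (fun n => (((Finset.range n).filter
          (fun i => ∀ j : Fin k, x (i * k + j) = w j)).card : ℝ) / n)
      Filter.atTop (nhds (1 / (Fintype.card A : ℝ) ^ k)) := by
  classical
  have hk0 : 0 < k := hk
  set C : ℕ := Fintype.card A with hCdef
  have hC1 : 1 ≤ C := Fintype.card_pos
  have hMr1 : (1:ℝ) ≤ (C:ℝ)^k := one_le_pow₀ (by exact_mod_cast hC1)
  set Mr : ℝ := (C:ℝ)^k with hMrdef
  have hMr0 : 0 < Mr := lt_of_lt_of_le one_pos hMr1
  set q : ℝ := 1 / Mr with hqdef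
  have hq0 : 0 < q := by positivity
  have hq1 : q ≤ 1 := by
    rw [hqdef, div_le_one hMr0]; exact hMr1
  have hcardK : ((Fintype.card (Fin k → A) : ℝ)) = Mr := by
    rw [Fintype.card_fun, Fintype.card_fin]; push_cast; rw [hMrdef]
  set ind : ℕ → ℝ := fun i => if (∀ j : Fin k, x (i*k+(j:ℕ)) = w j) then 1 else 0 with hind
  have hind01 : ∀ i, 0 ≤ ind i ∧ ind i ≤ 1 := by
    intro i; rw [hind]; dsimp only; split <;> norm_num
  have hBr : ∀ n : ℕ, (((Finset.range n).filter
      (fun i => ∀ j : Fin k, x (i * k + (j:ℕ)) = w j)).card : ℝ) = ∑ i ∈ Finset.range n, ind i := by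
    intro n
    rw [Finset.card_filter]
    push_cast
    rfl
  -- the centered indicator on blocks
  set Y : (Fin k → A) → ℝ := fun a => (if a = w then 1 else 0) - q with hY
  have hY0 : ∑ a : Fin k → A, Y a = 0 := by
    rw [hY, Finset.sum_sub_distrib, Finset.sum_ite_eq' Finset.univ w (fun _ => (1:ℝ)),
      Finset.sum_const, Finset.card_univ, nsmul_eq_mul, hcardK]
    have hone : Mr * q = 1 := by rw [hqdef, mul_one_div, div_self (ne_of_gt hMr0)]
    simp [hone]
  have hYb : ∀ a, |Y a| ≤ 1 := by
    intro a
    rw [hY]; dsimp only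
    rw [abs_le]
    constructor <;> split <;> simp <;> linarith
  have hY1 : ∑ a : Fin k → A, |Y a| ≤ 2 := by
    have hpt : ∀ a : Fin k → A, |Y a| ≤ (if a = w then (1:ℝ) else 0) + q := by
      intro a
      rw [hY]; dsimp only
      refine (abs_sub _ _).trans ?_
      gcongr
      · exact le_of_eq (abs_of_nonneg (by split <;> norm_num))
      · exact le_of_eq (abs_of_nonneg hq0.le)
    calc ∑ a : Fin k → A, |Y a| ≤ ∑ a : Fin k → A, ((if a = w then (1:ℝ) else 0) + q) :=
          Finset.sum_le_sum (fun a _ => hpt a)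
      _ = 1 + (Fintype.card (Fin k → A) : ℝ) * q := by
          rw [Finset.sum_add_distrib, Finset.sum_ite_eq' Finset.univ w (fun _ => (1:ℝ))]
          simp [Finset.card_univ]
      _ ≤ 2 := by
          rw [hcardK, hqdef, mul_one_div, div_self (ne_of_gt hMr0)]; norm_num
  rw [Metric.tendsto_atTop]
  intro ε hε
  set δ : ℝ := ε/8 with hδdef
  have hδ0 : 0 < δ := by positivity
  obtain ⟨t₁, ht₁⟩ := exists_nat_ge (416 * k / (ε * δ^3))
  set t : ℕ := max t₁ 1 with htdef
  have ht0 : 0 < t := lt_of_lt_of_le Nat.one_pos (le_max_right _ _)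
  have htR0 : (0:ℝ) < t := by exact_mod_cast ht0
  have hA : 416*(k:ℝ) ≤ ε*δ^3*t := by
    have h1 : (416 * (k:ℝ)) / (ε * δ^3) ≤ (t:ℝ) := by
      refine ht₁.trans ?_
      exact_mod_cast le_max_left t₁ 1
    rw [div_le_iff₀ (by positivity)] at h1
    nlinarith
  have htbig : 104 * (k:ℝ) / (δ^3 * t) ≤ ε/4 := by
    rw [div_le_iff₀ (by positivity)]
    nlinarith
  -- occurrence counts of super-block words
  have hocc : ∀ u : Fin t → Fin k → A,
      Tendsto (fun N => (occCount x (blockWord k t hk0 u) N : ℝ)/N) atTop (nhds (1/Mr^t)) := by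
    intro u
    have h := hx (blockWord k t hk0 u) (blockWord_ne_nil _ _ _ ht0 u)
    have he : (1:ℝ)/(C:ℝ)^((blockWord k t hk0 u).length) = 1/Mr^t := by
      rw [blockWord_length, hMrdef, ← pow_mul, Nat.mul_comm]
    rw [← hCdef] at h
    rw [he] at h
    exact h
  have hocc2 : ∀ᶠ N : ℕ in atTop, ∀ u : Fin t → Fin k → A,
      (occCount x (blockWord k t hk0 u) N : ℝ) ≤ 2/Mr^t * N := by
    rw [eventually_all]
    intro u
    have hlt : (1:ℝ)/Mr^t < 2/Mr^t := by
      have hp : (0:ℝ) < Mr^t := by positivity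
      rw [div_lt_div_iff₀ hp hp]
      nlinarith
    have h2 := (hocc u).eventually_lt_const hlt
    filter_upwards [h2, eventually_ge_atTop 1] with N hN hN1
    have hN0 : (0:ℝ) < N := by exact_mod_cast hN1
    rw [div_lt_iff₀ hN0] at hN
    linarith
  -- moment bound
  have hsum4 : ∑ u : Fin t → Fin k → A, (∑ s : Fin t, Y (u s))^4 ≤ 26 * t^2 * Mr^t := by
    have h := sumZ4 Y hY0 hYb hY1 t
    rwa [hcardK] at h
  -- tendsto of the super-window length
  have hNge : ∀ n : ℕ, n ≤ (n/t + 1)*(t*k) := by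
    intro n
    have h1 : n < (n/t + 1)*t := lt_div_succ_mul n t ht0
    calc n ≤ (n/t+1)*t := h1.le
      _ ≤ (n/t+1)*t*k := Nat.le_mul_of_pos_right _ hk0
      _ = (n/t+1)*(t*k) := by rw [Nat.mul_assoc]
  have hNtend : Tendsto (fun n : ℕ => (n/t + 1)*(t*k)) atTop atTop :=
    tendsto_atTop_mono hNge tendsto_id
  have hsmall : Tendsto (fun n : ℕ => (2*(t:ℝ))/n) atTop (nhds 0) :=
    tendsto_const_div_atTop_nhds_zero_nat _
  have main : ∀ᶠ n : ℕ in atTop,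
      dist ((((Finset.range n).filter
          (fun i => ∀ j : Fin k, x (i * k + (j:ℕ)) = w j)).card : ℝ) / n) q < ε := by
    filter_upwards [hNtend.eventually hocc2, eventually_ge_atTop t, eventually_ge_atTop 1,
        hsmall.eventually_lt_const (by positivity : (0:ℝ) < ε/4)] with n hoccn hnt hn1 hsm
    have hnR0 : (0:ℝ) < n := by exact_mod_cast hn1
    set Γ : ℕ := n/t + 1 with hΓdef
    set N : ℕ := Γ*(t*k) with hNdef
    set U : ℕ → Fin t → Fin k → A := fun g s j => x ((g*t+(s:ℕ))*k+(j:ℕ)) with hU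
    have hΓt1 : n < Γ*t := lt_div_succ_mul n t ht0
    have hΓt2 : Γ*t ≤ n + t := by
      have := Nat.div_mul_le_self n t
      calc Γ*t = n/t*t + t := by rw [hΓdef, Nat.add_mul, Nat.one_mul]
        _ ≤ n + t := by omega
    have hΓt3 : Γ*t ≤ 2*n := by omega
    -- per-block identity
    have hc : ∀ g : ℕ, ∑ s ∈ Finset.range t, ind (g*t+s) = (∑ s : Fin t, Y (U g s)) + t * q := by
      intro g
      rw [Finset.sum_range (fun s => ind (g*t+s))]
      have hpt : ∀ s : Fin t, ind (g*t+(s:ℕ)) = Y (U g s) + q := by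
        intro s
        rw [hind, hY]
        dsimp only
        have hiff : (U g s = w) ↔ (∀ j : Fin k, x ((g*t+(s:ℕ))*k + (j:ℕ)) = w j) := by
          exact funext_iff
        rw [if_congr hiff.symm rfl rfl]
        ring
      simp only [hpt]
      simp [Finset.sum_add_distrib, Finset.card_univ, mul_comm]
    -- decomposition of the count over Γ*t blocks
    have e1 : ∑ i ∈ Finset.range (Γ*t), ind i
        = (∑ g ∈ Finset.range Γ, ∑ s : Fin t, Y (U g s)) + Γ*(t*q) := by
      rw [sum_range_mul' ind t Γ]
      simp only [hc]
      rw [Finset.sum_add_distrib, Finset.sum_const, Finset.card_range, nsmul_eq_mul]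
    set Br : ℝ := ∑ i ∈ Finset.range n, ind i with hBrdef
    have e2 : Br ≤ ∑ i ∈ Finset.range (Γ*t), ind i := by
      apply Finset.sum_le_sum_of_subset_of_nonneg
      · exact Finset.range_subset_range.mpr hΓt1.le
      · intro i _ _; exact (hind01 i).1
    have e3 : ∑ i ∈ Finset.range (Γ*t), ind i ≤ Br + t := by
      have hsplit : ∑ i ∈ Finset.range (n + (Γ*t - n)), ind i
          = Br + ∑ i ∈ Finset.range (Γ*t - n), ind (n+i) := by
        rw [Finset.sum_range_add]
      rw [show Γ*t = n + (Γ*t - n) by omega, hsplit]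
      have : ∑ i ∈ Finset.range (Γ*t - n), ind (n+i) ≤ ∑ i ∈ Finset.range (Γ*t - n), (1:ℝ) :=
        Finset.sum_le_sum (fun i _ => (hind01 (n+i)).2)
      rw [Finset.sum_const, Finset.card_range, nsmul_eq_mul, mul_one] at this
      have h4 : ((Γ*t - n : ℕ):ℝ) ≤ t := by
        have : Γ*t - n ≤ t := by omega
        exact_mod_cast this
      linarith
    set ZS : ℝ := ∑ g ∈ Finset.range Γ, ∑ s : Fin t, Y (U g s) with hZSdef
    set S : ℝ := ∑ g ∈ Finset.range Γ, |∑ s : Fin t, Y (U g s)| with hSdef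
    have e4 : |ZS| ≤ S := Finset.abs_sum_le_sum_abs _ _
    have hS0 : 0 ≤ S := Finset.sum_nonneg (fun g _ => abs_nonneg _)
    have e5 : (n:ℝ)*q ≤ (Γ*t:ℕ)*q := by
      have : (n:ℝ) ≤ ((Γ*t:ℕ):ℝ) := by exact_mod_cast hΓt1.le
      exact mul_le_mul_of_nonneg_right this hq0.le
    have e6 : ((Γ*t:ℕ):ℝ)*q ≤ (n:ℝ)*q + t := by
      have h1 : ((Γ*t:ℕ):ℝ) ≤ (n:ℝ) + t := by exact_mod_cast hΓt2
      nlinarith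
    have e7 : ((Γ:ℕ):ℝ)*(t*q) = ((Γ*t:ℕ):ℝ)*q := by push_cast; ring
    -- combine: |Br - n*q| ≤ 2*t + S
    have key1 : |Br - n*q| ≤ 2*t + S := by
      rw [abs_le]
      have h8 := abs_le.mp e4
      constructor <;> linarith [e1, e2, e3, e5, e6, e7, h8.1, h8.2]
    -- bound S
    have hq4 : ∀ g, |∑ s : Fin t, Y (U g s)| ≤ (∑ s : Fin t, Y (U g s))^4/(δ*t)^3 + δ*t :=
      fun g => abs_le_quartic _ _ (by positivity)
    have hsum4g : ∑ g ∈ Finset.range Γ, (∑ s : Fin t, Y (U g s))^4 ≤ 52*t^2*N := by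
      have hfib := Finset.sum_fiberwise' (Finset.range Γ) U (fun u => (∑ s : Fin t, Y (u s))^4)
      rw [← hfib]
      have hcardle : ∀ u : Fin t → Fin k → A,
          (((Finset.range Γ).filter (fun g => U g = u)).card : ℝ)
            ≤ (occCount x (blockWord k t hk0 u) N : ℝ) := by
        intro u
        have : ((Finset.range Γ).filter (fun g => U g = u)).card
            ≤ occCount x (blockWord k t hk0 u) N := by
          apply Finset.card_le_card_of_injOn (fun g => g*(t*k))
          · intro g hg
            rw [Finset.mem_coe, Finset.mem_filter] at hg
            obtain ⟨hg1, hg2⟩ := hg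
            rw [Finset.mem_range] at hg1
            rw [Finset.mem_coe, Finset.mem_filter, Finset.mem_range]
            constructor
            · rw [hNdef]
              exact (Nat.mul_lt_mul_right (Nat.mul_pos ht0 hk0)).mpr hg1
            · intro j
              apply blockWord_occ x k t hk0 u g
              intro s jj
              rw [← hg2]
          · intro a _ b _ hab
            exact Nat.eq_of_mul_eq_mul_right (Nat.mul_pos ht0 hk0) hab
        exact_mod_cast this
      have hstep : ∀ u : Fin t → Fin k → A,
          ∑ g ∈ (Finset.range Γ).filter (fun g => U g = u), (∑ s : Fin t, Y (u s))^4
            ≤ (2/Mr^t * N) * (∑ s : Fin t, Y (u s))^4 := by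
        intro u
        rw [Finset.sum_const, nsmul_eq_mul]
        apply mul_le_mul_of_nonneg_right _ (by positivity)
        exact (hcardle u).trans (hoccn u)
      calc ∑ u : Fin t → Fin k → A,
            ∑ g ∈ (Finset.range Γ).filter (fun g => U g = u), (∑ s : Fin t, Y (u s))^4
          ≤ ∑ u : Fin t → Fin k → A, (2/Mr^t * N) * (∑ s : Fin t, Y (u s))^4 :=
            Finset.sum_le_sum (fun u _ => hstep u)
        _ = (2/Mr^t * N) * ∑ u : Fin t → Fin k → A, (∑ s : Fin t, Y (u s))^4 := by
            rw [Finset.mul_sum]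
        _ ≤ (2/Mr^t * N) * (26 * t^2 * Mr^t) := by
            apply mul_le_mul_of_nonneg_left hsum4 (by positivity)
        _ = 52*t^2*N * (Mr^t / Mr^t) := by ring
        _ = 52*t^2*N := by rw [div_self (by positivity), mul_one]
    have hSbound : S ≤ 52*t^2*(N:ℝ)/(δ*t)^3 + δ*t*Γ := by
      calc S ≤ ∑ g ∈ Finset.range Γ, ((∑ s : Fin t, Y (U g s))^4/(δ*t)^3 + δ*t) :=
            Finset.sum_le_sum (fun g _ => hq4 g)
        _ = (∑ g ∈ Finset.range Γ, (∑ s : Fin t, Y (U g s))^4)/(δ*t)^3 + δ*t*Γ := by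
            rw [Finset.sum_add_distrib, Finset.sum_const, Finset.card_range, nsmul_eq_mul,
              Finset.sum_div]
            ring
        _ ≤ 52*t^2*(N:ℝ)/(δ*t)^3 + δ*t*Γ := by
            gcongr
    have hN2 : (N:ℝ) ≤ 2*n*k := by
      have h1 : (N:ℕ) ≤ 2*n*k := by
        rw [hNdef]
        calc Γ*(t*k) = Γ*t*k := by ring
          _ ≤ 2*n*k := Nat.mul_le_mul_right k hΓt3
      exact_mod_cast h1
    have hterm1 : 52*(t:ℝ)^2*(N:ℝ)/(δ*t)^3 ≤ (ε/4)*n := by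
      have he : 52*(t:ℝ)^2*(N:ℝ)/(δ*t)^3 = 52*(N:ℝ)/(δ^3*t) := by
        field_simp
      rw [he]
      have h2 : 52*(N:ℝ)/(δ^3*t) ≤ 52*(2*n*k)/(δ^3*t) := by gcongr
      refine h2.trans ?_
      have h3 : 52*(2*(n:ℝ)*k)/(δ^3*t) = (104*k/(δ^3*t))*n := by ring
      rw [h3]
      exact mul_le_mul_of_nonneg_right htbig (by positivity)
    have hterm2 : δ*t*(Γ:ℝ) ≤ (ε/4)*n := by
      have h1 : ((Γ:ℕ):ℝ)*(t:ℝ) ≤ 2*n := by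
        have := hΓt3
        push_cast
        exact_mod_cast this
      calc δ*t*(Γ:ℝ) = δ*((Γ:ℝ)*t) := by ring
        _ ≤ δ*(2*n) := by gcongr
        _ = (ε/4)*n := by rw [hδdef]; ring
    have h2t : 2*(t:ℝ) < (ε/4)*n := by
      rw [div_lt_iff₀ hnR0] at hsm
      linarith
    have hpos : (0:ℝ) < ε*n := by positivity
    have habs : |Br - n*q| < ε*n := by
      calc |Br - n*q| ≤ 2*t + S := key1
        _ ≤ 2*t + (52*t^2*N/(δ*t)^3 + δ*t*Γ) := by linarith [hSbound]
        _ < (ε/4)*n + ((ε/4)*n + (ε/4)*n) := by linarith [hterm1, hterm2, h2t]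
        _ ≤ ε*n := by linarith [hpos]
    rw [Real.dist_eq, hBr n, ← hBrdef]
    have heq : Br/(n:ℝ) - q = (Br - n*q)/n := by field_simp
    rw [heq, abs_div, abs_of_pos hnR0, div_lt_iff₀ hnR0]
    linarith [habs]
  rw [eventually_atTop] at main
  obtain ⟨N₀, hN₀⟩ := main
  exact ⟨N₀, hN₀⟩
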